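/- Let A be a finite set with |A| = q ≥ 2 and let n ≥ 2. For every complete n-universal transformation f : A^m → A^m, the maximal sequential time satisfies st^max_f ≥ n·q^{n·q^n}. -/

import Mathlib

/-- The instruction of `A^m` induced by the `i`-th coordinate function of `f`. -/
def instr {A : Type*} {m : ℕ} (f : (Fin m → A) → Fin m → A) (i : Fin m) :
    (Fin m → A) → Fin m → A :=
  fun x => Function.update x i (f x i)

/-- Apply a list of induced instructions of `f`, first element of the list first. -/
def applyInstrs {A : Type*} {m : ℕ} (f : (Fin m → A) → Fin m → A) :
    List (Fin m) → (Fin m → A) → Fin m → A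
  | [], x => x
  | i :: l, x => applyInstrs f l (instr f i x)

/-- Projection of `A^m` onto the first `n` coordinates. -/
def pr {A : Type*} {m n : ℕ} (hmn : n ≤ m) (x : Fin m → A) : Fin n → A :=
  fun i => x (Fin.castLE hmn i)

/-- `hs` witnesses that `f` sequentially simulates the sequence `gs`: the `k`-th
element of `hs` is a nonempty list of instruction indices expressing `h^(k) ∈ S_f`,
and for each `i` the composition `h^(1) ∘ ⋯ ∘ h^(i)` simulates `g^(i)`. -/
def SeqWitness {A : Type*} {m n : ℕ} (hmn : n ≤ m)
    (f : (Fin m → A) → Fin m → A)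
    (gs : List ((Fin n → A) → Fin n → A))
    (hs : List (List (Fin m))) : Prop :=
  hs.length = gs.length ∧ (∀ l ∈ hs, l ≠ []) ∧
    ∀ (i : ℕ) (hi : i < gs.length) (x : Fin m → A),
      gs.get ⟨i, hi⟩ (pr hmn x) = pr hmn (applyInstrs f ((hs.take (i + 1)).flatten) x)

lemma applyInstrs_append {A : Type*} {m : ℕ} (f : (Fin m → A) → Fin m → A)
    (l1 l2 : List (Fin m)) (x : Fin m → A) :
    applyInstrs f (l1 ++ l2) x = applyInstrs f l2 (applyInstrs f l1 x) := by
  induction l1 generalizing x with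
  | nil => rfl
  | cons a l ih => rw [List.cons_append, applyInstrs, applyInstrs, ih]

lemma applyInstrs_apply_of_not_mem {A : Type*} {m : ℕ} (f : (Fin m → A) → Fin m → A)
    (l : List (Fin m)) (j : Fin m) (hj : j ∉ l) (x : Fin m → A) :
    applyInstrs f l x j = x j := by
  induction l generalizing x with
  | nil => rfl
  | cons a l ih =>
    simp only [List.mem_cons, not_or] at hj
    rw [applyInstrs, ih hj.2, instr, Function.update_of_ne hj.1]

lemma digits_inj (M : ℕ) (hM : 1 ≤ M) :
    ∀ (N k k' : ℕ), k < M ^ N → k' < M ^ N →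
      (∀ j < N, k / M ^ j % M = k' / M ^ j % M) → k = k' := by
  intro N
  induction N with
  | zero => intro k k' hk hk' _; simp at hk hk'; omega
  | succ N ih =>
    intro k k' hk hk' h
    have h0 := h 0 (Nat.succ_pos N)
    simp only [pow_zero, Nat.div_one] at h0
    have hdiv : k / M = k' / M := by
      apply ih
      · rw [Nat.div_lt_iff_lt_mul (by omega)]; rw [pow_succ] at hk; exact hk
      · rw [Nat.div_lt_iff_lt_mul (by omega)]; rw [pow_succ] at hk'; exact hk'
      · intro j hj
        have := h (j + 1) (by omega)
        rwa [pow_succ', ← Nat.div_div_eq_div_mul, ← Nat.div_div_eq_div_mul] at this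
    rw [← Nat.div_add_mod k M, ← Nat.div_add_mod k' M, hdiv, h0]

lemma succ_div_cases (k t : ℕ) (ht : 1 ≤ t) :
    (k + 1) / t = k / t ∨ (k + 1) / t = k / t + 1 := by
  have h1 : k / t ≤ (k + 1) / t := Nat.div_le_div_right (by omega)
  have h2 : (k + 1) / t ≤ k / t + 1 := by
    calc (k + 1) / t ≤ (k + t) / t := Nat.div_le_div_right (by omega)
    _ = k / t + 1 := Nat.add_div_right k ht
  omega

lemma sum_ge_of_forall (n : ℕ) : ∀ (L : List ℕ), (∀ a ∈ L, n ≤ a) → n * L.length ≤ L.sum := by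
  intro L
  induction L with
  | nil => simp
  | cons a L ih =>
    intro h
    simp only [List.length_cons, List.sum_cons]
    have := ih (fun b hb => h b (List.mem_cons_of_mem a hb))
    have := h a List.mem_cons_self
    calc n * (L.length + 1) = n * L.length + n := by ring
    _ ≤ a + L.sum := by omega


/-- For every complete `n`-universal transformation `f` of `A^m`, the maximal sequential
time satisfies `st^max_f ≥ n·q^(n·q^n)`: some sequence listing all transformations of
`A^n` exactly once requires at least `n·q^(n·q^n)` instructions in every witness. -/
theorem complete_universal_max_seq_time_lower (q n m : ℕ) (hq : 2 ≤ q) (hn : 2 ≤ n)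
    (hmn : n ≤ m) (A : Type*) [Fintype A] (hA : Fintype.card A = q)
    (f : (Fin m → A) → Fin m → A)
    (hf : ∀ gs : List ((Fin n → A) → Fin n → A), ∃ hs, SeqWitness hmn f gs hs) :
    ∃ gs : List ((Fin n → A) → Fin n → A), gs.Nodup ∧ (∀ g, g ∈ gs) ∧
      ∀ hs, SeqWitness hmn f gs hs → n * q ^ (n * q ^ n) ≤ hs.flatten.length := by
  classical
  haveI : Nonempty A := Fintype.card_pos_iff.mp (by omega)
  haveI : NeZero n := ⟨by omega⟩
  obtain ⟨a0⟩ := ‹Nonempty A›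
  set M := q ^ q ^ n with hMdef
  have hqn4 : 4 ≤ q ^ n := by
    calc (4 : ℕ) = 2 ^ 2 := by norm_num
    _ ≤ q ^ 2 := Nat.pow_le_pow_left hq 2
    _ ≤ q ^ n := Nat.pow_le_pow_right (by omega) hn
  have hM3 : 3 ≤ M := by
    calc (3 : ℕ) ≤ 2 ^ 4 := by norm_num
    _ ≤ 2 ^ q ^ n := Nat.pow_le_pow_right (by omega) hqn4
    _ ≤ q ^ q ^ n := Nat.pow_le_pow_left hq _
  haveI : NeZero M := ⟨by omega⟩
  haveI : Fact (1 < M) := ⟨by omega⟩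
  have hcardF : Fintype.card ((Fin n → A) → A) = M := by
    rw [Fintype.card_fun, Fintype.card_fun, hA, Fintype.card_fin]
  let e0 : ZMod M ≃ ((Fin n → A) → A) :=
    Fintype.equivOfCardEq (by rw [ZMod.card, hcardF])
  let e : ZMod M ≃ ((Fin n → A) → A) := e0.trans (Equiv.swap (e0 0) (fun _ => a0))
  have he0 : e 0 = fun _ => a0 := by
    simp [e, Equiv.swap_apply_left]
  let d : ℕ → ℕ → ZMod M := fun j k => ((k / M ^ j : ℕ) : ZMod M)
  let φ : ℕ → Fin n → ZMod M :=
    fun k j => if j = (0 : Fin n) then d 0 k else d (j : ℕ) k + d 0 k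
  let G : ℕ → ((Fin n → A) → (Fin n → A)) := fun k x j => e (φ k j) x
  -- digit facts
  have hd0 : ∀ k, d 0 (k + 1) = d 0 k + 1 := by
    intro k
    simp only [d, pow_zero, Nat.div_one]
    push_cast
    ring
  have hdstep : ∀ k j, d j (k + 1) = d j k ∨ d j (k + 1) = d j k + 1 := by
    intro k j
    rcases succ_div_cases k (M ^ j) (Nat.one_le_pow _ _ (by omega)) with h | h
    · left; simp only [d, h]
    · right; simp only [d, h]; push_cast; ring
  have h2ne : (2 : ZMod M) ≠ 0 := by
    have : ((2 : ℕ) : ZMod M) ≠ 0 := by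
      rw [Ne, ZMod.natCast_eq_zero_iff]
      intro hdvd
      have := Nat.le_of_dvd (by norm_num) hdvd
      omega
    simpa using this
  have hφne : ∀ k (j : Fin n), φ (k + 1) j ≠ φ k j := by
    intro k j
    by_cases hj : j = (0 : Fin n)
    · subst hj
      simp only [φ, if_pos rfl, hd0]
      intro heq
      have h1 : (1 : ZMod M) = 0 := by linear_combination heq
      exact one_ne_zero h1
    · simp only [φ, if_neg hj]
      rcases hdstep k (j : ℕ) with h | h
      · rw [h, hd0 k]
        intro heq
        have h1 : (1 : ZMod M) = 0 := by linear_combination heq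
        exact one_ne_zero h1
      · rw [h, hd0 k]
        intro heq
        have h1 : (2 : ZMod M) = 0 := by linear_combination heq
        exact h2ne h1
  have hφinj : ∀ k k', k < M ^ n → k' < M ^ n → (∀ j : Fin n, φ k j = φ k' j) → k = k' := by
    intro k k' hk hk' h
    have h0 : d 0 k = d 0 k' := by simpa only [φ, if_pos rfl] using h 0
    have hd : ∀ j : Fin n, d (j : ℕ) k = d (j : ℕ) k' := by
      intro j
      by_cases hj : j = (0 : Fin n)
      · subst hj; simpa using h0
      · have hjj := h j
        simp only [φ, if_neg hj] at hjj
        rw [h0] at hjj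
        exact add_right_cancel hjj
    apply digits_inj M (by omega) n k k' hk hk'
    intro j hj
    have := congrArg ZMod.val (hd ⟨j, hj⟩)
    simpa only [d, ZMod.val_natCast] using this
  have hGinj : ∀ k k', k < M ^ n → k' < M ^ n → G k = G k' → k = k' := by
    intro k k' hk hk' h
    apply hφinj k k' hk hk'
    intro j
    apply e.injective
    funext x
    exact congrFun (congrFun h x) j
  -- the list
  refine ⟨(List.range (M ^ n)).map G, ?_, ?_, ?_⟩
  · apply List.Nodup.map_on ?_ List.nodup_range
    intro x hx y hy hxy
    exact hGinj x y (List.mem_range.mp hx) (List.mem_range.mp hy) hxy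
  · intro g
    have hcardT : Fintype.card ((Fin n → A) → (Fin n → A)) = M ^ n := by
      rw [Fintype.card_fun, Fintype.card_fun, hA, Fintype.card_fin, hMdef,
        ← pow_mul, ← pow_mul, Nat.mul_comm]
    have hnodup : ((List.range (M ^ n)).map G).Nodup := by
      apply List.Nodup.map_on ?_ List.nodup_range
      intro x hx y hy hxy
      exact hGinj x y (List.mem_range.mp hx) (List.mem_range.mp hy) hxy
    have huniv : ((List.range (M ^ n)).map G).toFinset = Finset.univ := by
      apply Finset.eq_univ_of_card
      rw [List.toFinset_card_of_nodup hnodup]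
      simp [hcardT]
    rw [← List.mem_toFinset, huniv]
    exact Finset.mem_univ g
  · -- main bound
    set gs := (List.range (M ^ n)).map G with hgsdef
    have hgslen : gs.length = M ^ n := by simp [hgsdef]
    have hget : ∀ (i : ℕ) (hi : i < gs.length), gs.get ⟨i, hi⟩ = G i := by
      intro i hi
      simp [hgsdef, List.get_eq_getElem]
    -- extension of states
    have hn0 : 0 < n := by omega
    let ext : (Fin n → A) → (Fin m → A) :=
      fun x0 i => if h : (i : ℕ) < n then x0 ⟨(i : ℕ), h⟩ else x0 ⟨0, hn0⟩
    have hext : ∀ x0, pr hmn (ext x0) = x0 := by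
      intro x0
      funext j
      simp only [pr, ext, Fin.coe_castLE, j.isLt, dif_pos, Fin.eta]
    -- pointwise difference witnesses
    have hdiff : ∀ k (j : Fin n), ∃ x0 : Fin n → A, G (k + 1) x0 j ≠ G k x0 j := by
      intro k j
      have hne : e (φ (k + 1) j) ≠ e (φ k j) := fun h => hφne k j (e.injective h)
      rw [Function.ne_iff] at hne
      obtain ⟨x0, hx0⟩ := hne
      exact ⟨x0, hx0⟩
    have hbase : ∀ j : Fin n, ∃ x0 : Fin n → A, G 0 x0 j ≠ x0 j := by
      intro j
      obtain ⟨b, hb⟩ := Fintype.exists_ne_of_one_lt_card (by omega) a0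
      refine ⟨fun _ => b, ?_⟩
      have hφ0 : φ 0 j = 0 := by
        simp [φ, d]
      simp only [G, hφ0, he0]
      exact fun h => hb h.symm
    intro hs hw
    obtain ⟨hlen, -, hsim⟩ := hw
    -- every block contains every low instruction index
    have hblock : ∀ (i : ℕ) (hi : i < hs.length) (j : Fin n),
        Fin.castLE hmn j ∈ hs.get ⟨i, hi⟩ := by
      intro i hi j
      by_contra hnotin
      have hi' : i < gs.length := by rw [← hlen]; exact hi
      have hsplit : (hs.take (i + 1)).flatten = (hs.take i).flatten ++ hs.get ⟨i, hi⟩ := by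
        rw [List.take_succ, List.getElem?_eq_getElem hi, List.flatten_append]
        simp [List.get_eq_getElem]
      have hkey : ∀ x : Fin m → A,
          applyInstrs f ((hs.take (i + 1)).flatten) x (Fin.castLE hmn j)
            = applyInstrs f ((hs.take i).flatten) x (Fin.castLE hmn j) := by
        intro x
        rw [hsplit, applyInstrs_append, applyInstrs_apply_of_not_mem _ _ _ hnotin]
      cases i with
      | zero =>
        obtain ⟨x0, hx0⟩ := hbase j
        have hsim0 := hsim 0 hi' (ext x0)
        rw [hget 0 hi', hext] at hsim0
        have heq := congrFun hsim0 j
        simp only [pr] at heq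
        rw [hkey] at heq
        simp only [List.take_zero, List.flatten_nil, applyInstrs] at heq
        have : ext x0 (Fin.castLE hmn j) = x0 j := congrFun (hext x0) j
        rw [this] at heq
        exact hx0 heq
      | succ k =>
        obtain ⟨x0, hx0⟩ := hdiff k j
        have hk' : k < gs.length := by omega
        have hsim1 := hsim (k + 1) hi' (ext x0)
        have hsim0 := hsim k hk' (ext x0)
        rw [hget (k + 1) hi', hext] at hsim1
        rw [hget k hk', hext] at hsim0
        have heq1 := congrFun hsim1 j
        have heq0 := congrFun hsim0 j
        simp only [pr] at heq1 heq0
        rw [hkey] at heq1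
        rw [← heq0] at heq1
        exact hx0 heq1
    -- every block has length at least n
    have hblocklen : ∀ l ∈ hs, n ≤ l.length := by
      intro l hl
      obtain ⟨⟨i, hi⟩, rfl⟩ := List.mem_iff_get.mp hl
      have hsub : Finset.univ.image (fun j : Fin n => Fin.castLE hmn j)
          ⊆ (hs.get ⟨i, hi⟩).toFinset := by
        intro z hz
        simp only [Finset.mem_image] at hz
        obtain ⟨j, -, rfl⟩ := hz
        rw [List.mem_toFinset]
        exact hblock i hi j
      have h1 := Finset.card_le_card hsub
      rw [Finset.card_image_of_injective _ (Fin.castLE_injective hmn),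
        Finset.card_univ, Fintype.card_fin] at h1
      exact h1.trans (List.toFinset_card_le _)
    -- sum up
    have hsum : n * hs.length ≤ (hs.map List.length).sum := by
      have := sum_ge_of_forall n (hs.map List.length) (by
        intro a ha
        obtain ⟨l, hl, rfl⟩ := List.mem_map.mp ha
        exact hblocklen l hl)
      rwa [List.length_map] at this
    have hexp : n * q ^ (n * q ^ n) = n * hs.length := by
      rw [hlen, hgslen, hMdef, ← pow_mul, Nat.mul_comm n (q ^ n)]
    rw [List.length_flatten, hexp]
    exact hsum
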